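/- Fix n ≥ 2 and 2 ≤ k ≤ n, and let B_n^k be the connected building set on [n] consisting of all singletons and all subsets of cardinality at least k. Then the q-h-polynomial satisfies h_{B_n^k}(t,q) = Σ_{A} Σ_{π ∈ S_A} t^{des(π) + c(A,π)} q^{maj(π) + des(π) + c(A,π)}, where the outer sum is over all subsets A ⊆ [n] with |A| = n − k + 1, the inner sum is over all orderings π = π₁π₂⋯π_{n−k+1} of the elements of A, and c(A,π) = |{ j ∈ [n] \ A : j > π₁ }|. -/

import Mathlib

open scoped Classical

noncomputable section

/-- A rooted tree on the vertex set `S ⊆ ℕ`, encoded by its root and its parent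
function; edges are directed away from the root (so each non-root vertex `i`
carries the edge `(i, parent i)`, with `parent i` closer to the root).  The
parent function is normalized to be the identity outside `S` and at the root. -/
structure RTree (S : Finset ℕ) where
  root : ℕ
  root_mem : root ∈ S
  parent : ℕ → ℕ
  parent_out : ∀ i, i ∉ S → parent i = i
  parent_root : parent root = root
  parent_mem : ∀ i ∈ S, parent i ∈ S
  reach : ∀ i ∈ S, ∃ k, parent^[k] i = root

namespace RTree

variable {S : Finset ℕ}

/-- The set `T_{≤ i}` of descendants of `i` in `T` (including `i` itself). -/
def desc (T : RTree S) (i : ℕ) : Finset ℕ :=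
  S.filter fun j => ∃ k, T.parent^[k] j = i

/-- The depth of a vertex: its distance to the root. -/
def dp (T : RTree S) (x : ℕ) : ℕ :=
  sInf {k | T.parent^[k] x = T.root}

/-- The depth of the tree: the maximal depth of a vertex. -/
def depth (T : RTree S) : ℕ := S.sup T.dp

/-- The set of descent edges `(i, parent i)` with `i > parent i`, recorded by
the child endpoint `i`. -/
def desSet (T : RTree S) : Finset ℕ :=
  S.filter fun i => i ≠ T.root ∧ T.parent i < i

/-- The number of descents of `T`. -/
def des (T : RTree S) : ℕ := T.desSet.card

/-- The major index of `T`: the sum, over all descent edges `(i,j)` of `T`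
(with `j = parent i`), of `depth T - dp j`, i.e. of the minimal rank of `j`. -/
def maj (T : RTree S) : ℕ :=
  ∑ i ∈ T.desSet, (T.depth - T.dp (T.parent i))

/-- The statistic `μ(T)`: the sum, over all edges `(i,j)` of `T`
(with `j = parent i`), of `depth T - dp j`. -/
def mu (T : RTree S) : ℕ :=
  ∑ i ∈ S.filter (fun i => i ≠ T.root), (T.depth - T.dp (T.parent i))

end RTree

/-- `B` is a building set on the finite ground set `S`. -/
def IsBuildingSet (S : Finset ℕ) (B : Finset (Finset ℕ)) : Prop :=
  (∀ I ∈ B, I ⊆ S ∧ I.Nonempty) ∧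
  (∀ I ∈ B, ∀ J ∈ B, (I ∩ J).Nonempty → I ∪ J ∈ B) ∧
  (∀ i ∈ S, ({i} : Finset ℕ) ∈ B)

/-- `B` is a connected building set on `S`. -/
def IsConnBuildingSet (S : Finset ℕ) (B : Finset (Finset ℕ)) : Prop :=
  IsBuildingSet S B ∧ S ∈ B

/-- `T` is a `B`-tree: all descendant sets belong to `B`, and no union of
descendant sets of `k ≥ 2` pairwise incomparable nodes belongs to `B`. -/
def IsBTree (S : Finset ℕ) (B : Finset (Finset ℕ)) (T : RTree S) : Prop :=
  (∀ i ∈ S, T.desc i ∈ B) ∧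
  ∀ I : Finset ℕ, I ⊆ S → 2 ≤ I.card →
    (∀ i ∈ I, ∀ j ∈ I, i ≠ j → i ∉ T.desc j ∧ j ∉ T.desc i) →
    I.biUnion T.desc ∉ B

/-- The descent set of a word `l = l₀ l₁ ⋯`, recorded with `1`-based positions
shifted down by one: `i ∈ wordDesSet l` iff `l_i > l_{i+1}` (`0`-indexed). -/
def wordDesSet (l : List ℕ) : Finset ℕ :=
  (Finset.range (l.length - 1)).filter fun i => l.getD (i + 1) 0 < l.getD i 0

/-- The number of descents of a word. -/
def wordDes (l : List ℕ) : ℕ := (wordDesSet l).card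

/-- The major index of a word: the sum of the (`1`-based) descent positions. -/
def wordMaj (l : List ℕ) : ℕ := ∑ i ∈ wordDesSet l, (i + 1)

namespace Aux
open Finset

variable {S : Finset ℕ} (T : RTree S)

lemma iter_mem {i : ℕ} (hi : i ∈ S) (t : ℕ) : T.parent^[t] i ∈ S := by
  induction t with
  | zero => simpa
  | succ t ih => rw [Function.iterate_succ_apply']; exact T.parent_mem _ ih

lemma iter_root (t : ℕ) : T.parent^[t] T.root = T.root := by
  induction t with
  | zero => rfl
  | succ t ih => rw [Function.iterate_succ_apply', ih, T.parent_root]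

lemma iter_dp {i : ℕ} (hi : i ∈ S) : T.parent^[T.dp i] i = T.root :=
  Nat.sInf_mem (T.reach i hi)

lemma dp_le {i t : ℕ} (h : T.parent^[t] i = T.root) : T.dp i ≤ t := Nat.sInf_le h

lemma dp_root : T.dp T.root = 0 :=
  Nat.le_zero.1 (dp_le T (by rfl))

lemma dp_eq_zero_iff {i : ℕ} (hi : i ∈ S) : T.dp i = 0 ↔ i = T.root := by
  constructor
  · intro h
    have := iter_dp T hi
    rwa [h] at this
  · rintro rfl; exact dp_root T

lemma dp_parent {i : ℕ} (hi : i ∈ S) (h : i ≠ T.root) :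
    T.dp (T.parent i) + 1 = T.dp i := by
  have h1 : 1 ≤ T.dp i := by
    rcases Nat.eq_zero_or_pos (T.dp i) with h0 | h0
    · exact absurd ((dp_eq_zero_iff T hi).1 h0) h
    · exact h0
  have h2 : T.dp (T.parent i) ≤ T.dp i - 1 := by
    apply dp_le
    have := iter_dp T hi
    rwa [show T.dp i = (T.dp i - 1) + 1 by omega, Function.iterate_succ_apply] at this
  have h3 : T.dp i ≤ T.dp (T.parent i) + 1 := by
    apply dp_le
    rw [Function.iterate_succ_apply]
    exact iter_dp T (T.parent_mem i hi)
  omega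

lemma dp_iter {i : ℕ} (hi : i ∈ S) {s : ℕ} (hs : s ≤ T.dp i) :
    T.dp (T.parent^[s] i) = T.dp i - s := by
  induction s with
  | zero => simp
  | succ s ih =>
    have hs' : s ≤ T.dp i := by omega
    have hx : T.parent^[s] i ∈ S := iter_mem T hi s
    have hdx : T.dp (T.parent^[s] i) = T.dp i - s := ih hs'
    have hxr : T.parent^[s] i ≠ T.root := by
      intro hr
      have : T.dp (T.parent^[s] i) = 0 := by rw [hr]; exact dp_root T
      omega
    have := dp_parent T hx hxr
    rw [Function.iterate_succ_apply']
    omega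

lemma mem_desc {i j : ℕ} : j ∈ T.desc i ↔ j ∈ S ∧ ∃ t, T.parent^[t] j = i := by
  simp [RTree.desc]

lemma self_mem_desc {i : ℕ} (hi : i ∈ S) : i ∈ T.desc i :=
  (mem_desc T).2 ⟨hi, 0, rfl⟩

lemma desc_subset_of_iter {i j t : ℕ} (h : T.parent^[t] j = i) : T.desc j ⊆ T.desc i := by
  intro x hx
  rcases (mem_desc T).1 hx with ⟨hxS, s, hs⟩
  refine (mem_desc T).2 ⟨hxS, t + s, ?_⟩
  rw [Function.iterate_add_apply, hs, h]

lemma desc_key {i j : ℕ} (hi : i ∈ S) (h : j ∈ T.desc i) :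
    T.dp i ≤ T.dp j ∧ T.parent^[T.dp j - T.dp i] j = i := by
  rcases (mem_desc T).1 h with ⟨hjS, t, ht⟩
  by_cases hc : t ≤ T.dp j
  · have := dp_iter T hjS hc
    rw [ht] at this
    constructor
    · omega
    · rw [show T.dp j - T.dp i = t by omega]; exact ht
  · have hroot : i = T.root := by
      rw [show t = (t - T.dp j) + T.dp j by omega, Function.iterate_add_apply,
        iter_dp T hjS, iter_root] at ht
      exact ht.symm
    subst hroot
    rw [dp_root]
    exact ⟨Nat.zero_le _, by simpa using iter_dp T hjS⟩

lemma desc_root : T.desc T.root = S := by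
  apply Finset.Subset.antisymm
  · exact Finset.filter_subset _ _
  · intro x hx
    exact (mem_desc T).2 ⟨hx, T.reach x hx⟩

lemma eq_of_parent_eq {T T' : RTree S} (hp : T.parent = T'.parent) : T = T' := by
  have hr : T.root = T'.root := by
    rcases T'.reach T.root T.root_mem with ⟨t, ht⟩
    rw [← hp] at ht
    rw [← ht, iter_root]
  cases T; cases T'
  simp_all

end Aux
namespace Aux

/-- parent function of the tree built from the word `l`. -/
def pfun (S : Finset ℕ) (l : List ℕ) (j : ℕ) : ℕ :=
  if j ∈ S then (if j ∈ l then l.getD (List.idxOf j l + 1) j else l.headD 0) else j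

section TreeOfAux

variable (S : Finset ℕ) (l : List ℕ)

lemma idxOf_getD (h2 : l.Nodup) {i : ℕ} (hi : i < l.length) :
    List.idxOf (l.getD i 0) l = i := by
  rw [List.getD_eq_getElem l 0 hi]
  exact List.get_idxOf h2 ⟨i, hi⟩

lemma getD_mem {i : ℕ} (hi : i < l.length) : l.getD i 0 ∈ l := by
  rw [List.getD_eq_getElem l 0 hi]; exact List.getElem_mem _

lemma getD_inj (h2 : l.Nodup) {i j : ℕ} (hi : i < l.length) (hj : j < l.length)
    (h : l.getD i 0 = l.getD j 0) : i = j := by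
  rw [List.getD_eq_getElem l 0 hi, List.getD_eq_getElem l 0 hj] at h
  exact List.Nodup.getElem_inj_iff h2 |>.1 h

variable (h2 : l.Nodup) (h3 : ∀ x ∈ l, x ∈ S)

include h2 h3 in
lemma pfun_getD {i : ℕ} (hi : i < l.length) :
    pfun S l (l.getD i 0) = l.getD (i+1) (l.getD i 0) := by
  have hmem : l.getD i 0 ∈ l := getD_mem l hi
  rw [pfun, if_pos (h3 _ hmem), if_pos hmem, idxOf_getD l h2 hi]

include h2 h3 in
lemma pfun_getD' {i : ℕ} (hi : i + 1 < l.length) :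
    pfun S l (l.getD i 0) = l.getD (i+1) 0 := by
  rw [pfun_getD S l h2 h3 (by omega), List.getD_eq_getElem l _ hi,
    List.getD_eq_getElem l 0 hi]

include h2 h3 in
lemma pfun_last (h1 : l ≠ []) :
    pfun S l (l.getD (l.length - 1) 0) = l.getD (l.length - 1) 0 := by
  have hl : 0 < l.length := List.length_pos_iff.2 h1
  rw [pfun_getD S l h2 h3 (by omega)]
  exact List.getD_eq_default _ _ (by omega)

include h2 h3 in
lemma pfun_iter_last (h1 : l ≠ []) (t : ℕ) :
    (pfun S l)^[t] (l.getD (l.length - 1) 0) = l.getD (l.length - 1) 0 := by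
  induction t with
  | zero => rfl
  | succ t ih => rw [Function.iterate_succ_apply', ih, pfun_last S l h2 h3 h1]

include h2 h3 in
lemma pfun_iter (h1 : l ≠ []) {i : ℕ} (hi : i < l.length) (t : ℕ) :
    (pfun S l)^[t] (l.getD i 0) = l.getD (min (i+t) (l.length - 1)) 0 := by
  induction t generalizing i with
  | zero =>
    have hmin : min (i+0) (l.length - 1) = i := by omega
    rw [hmin, Function.iterate_zero_apply]
  | succ t ih =>
    by_cases hc : i + 1 < l.length
    · rw [Function.iterate_succ_apply, pfun_getD' S l h2 h3 hc, ih hc]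
      congr 2; omega
    · have hie : i = l.length - 1 := by omega
      subst hie
      rw [Function.iterate_succ_apply, pfun_last S l h2 h3 h1,
        pfun_iter_last S l h2 h3 h1]
      congr 1; omega

lemma pfun_leaf {j : ℕ} (hj : j ∈ S) (hjl : j ∉ l) : pfun S l j = l.headD 0 := by
  rw [pfun, if_pos hj, if_neg hjl]

lemma headD_eq_getD (h1 : l ≠ []) : l.headD 0 = l.getD 0 0 := by
  cases l with
  | nil => simp at h1
  | cons a l => rfl

include h2 h3 in
lemma pfun_iter_leaf (h1 : l ≠ []) {j : ℕ} (hj : j ∈ S) (hjl : j ∉ l) (t : ℕ) :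
    (pfun S l)^[t+1] j = l.getD (min t (l.length - 1)) 0 := by
  rw [Function.iterate_succ_apply, pfun_leaf S l hj hjl, headD_eq_getD l h1,
    pfun_iter S l h2 h3 h1 (List.length_pos_iff.2 h1) t]
  congr 1; omega

include h2 h3 in
omit h2 h3 in
lemma pfun_out {j : ℕ} (hj : j ∉ S) : pfun S l j = j := by
  rw [pfun, if_neg hj]

/-- The tree built from a valid word. -/
def treeOfAux (h1 : l ≠ []) (h2 : l.Nodup) (h3 : ∀ x ∈ l, x ∈ S) : RTree S where
  root := l.getD (l.length - 1) 0
  root_mem := h3 _ (getD_mem l (by have := List.length_pos_iff.2 h1; omega))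
  parent := pfun S l
  parent_out := fun i hi => pfun_out S l hi
  parent_root := pfun_last S l h2 h3 h1
  parent_mem := by
    intro i hi
    by_cases hil : i ∈ l
    · have hidx : List.idxOf i l < l.length := List.idxOf_lt_length_iff.2 hil
      rw [pfun, if_pos hi, if_pos hil]
      by_cases hc : List.idxOf i l + 1 < l.length
      · rw [List.getD_eq_getElem l _ hc]
        exact h3 _ (List.getElem_mem _)
      · rw [List.getD_eq_default _ _ (by omega)]; exact hi
    · rw [pfun_leaf S l hi hil, headD_eq_getD l h1]
      exact h3 _ (getD_mem l (List.length_pos_iff.2 h1))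
  reach := by
    intro i hi
    have hl : 0 < l.length := List.length_pos_iff.2 h1
    by_cases hil : i ∈ l
    · have hidx : List.idxOf i l < l.length := List.idxOf_lt_length_iff.2 hil
      refine ⟨l.length - 1 - List.idxOf i l, ?_⟩
      have hig : l.getD (List.idxOf i l) 0 = i := by
        rw [List.getD_eq_getElem l 0 hidx]
        exact List.idxOf_get hidx
      have hkey : (pfun S l)^[l.length - 1 - List.idxOf i l] (l.getD (List.idxOf i l) 0)
          = l.getD (min (List.idxOf i l + (l.length - 1 - List.idxOf i l)) (l.length - 1)) 0 :=
        pfun_iter S l h2 h3 h1 hidx _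
      rw [hig] at hkey
      rw [hkey]
      congr 1; omega
    · refine ⟨(l.length - 1) + 1, ?_⟩
      rw [pfun_iter_leaf S l h2 h3 h1 hi hil]
      congr 1; omega

end TreeOfAux
end Aux

namespace Aux
open Finset

section Stats

variable (S : Finset ℕ) (l : List ℕ)
  (h1 : l ≠ []) (h2 : l.Nodup) (h3 : ∀ x ∈ l, x ∈ S)

include h1 h2 h3

lemma root_treeOfAux : (treeOfAux S l h1 h2 h3).root = l.getD (l.length - 1) 0 := rfl

lemma parent_treeOfAux : (treeOfAux S l h1 h2 h3).parent = pfun S l := rfl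

lemma dp_chain {i : ℕ} (hi : i < l.length) :
    (treeOfAux S l h1 h2 h3).dp (l.getD i 0) = l.length - 1 - i := by
  have hl : 0 < l.length := List.length_pos_iff.2 h1
  apply le_antisymm
  · apply Nat.sInf_le
    show (pfun S l)^[l.length - 1 - i] (l.getD i 0) = l.getD (l.length - 1) 0
    rw [pfun_iter S l h2 h3 h1 hi]
    congr 1; omega
  · apply le_csInf ⟨_, by
      show (pfun S l)^[l.length - 1 - i] (l.getD i 0) = l.getD (l.length - 1) 0
      rw [pfun_iter S l h2 h3 h1 hi]; congr 1; omega⟩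
    intro t ht
    have ht' : (pfun S l)^[t] (l.getD i 0) = l.getD (l.length - 1) 0 := ht
    rw [pfun_iter S l h2 h3 h1 hi] at ht'
    have := getD_inj l h2 (by omega : min (i + t) (l.length - 1) < l.length) (by omega) ht'
    omega

lemma dp_leaf {j : ℕ} (hj : j ∈ S) (hjl : j ∉ l) :
    (treeOfAux S l h1 h2 h3).dp j = l.length := by
  have hl : 0 < l.length := List.length_pos_iff.2 h1
  apply le_antisymm
  · apply Nat.sInf_le
    show (pfun S l)^[l.length] j = l.getD (l.length - 1) 0
    rw [show l.length = (l.length - 1) + 1 by omega, pfun_iter_leaf S l h2 h3 h1 hj hjl]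
    congr 1; omega
  · apply le_csInf ⟨(l.length - 1) + 1, by
      show (pfun S l)^[(l.length - 1) + 1] j = l.getD (l.length - 1) 0
      rw [pfun_iter_leaf S l h2 h3 h1 hj hjl]; congr 1; omega⟩
    intro t ht
    match t with
    | 0 =>
      exfalso
      have ht' : j = l.getD (l.length - 1) 0 := ht
      exact hjl (ht' ▸ getD_mem l (by omega))
    | (u+1) =>
      have ht' : (pfun S l)^[u+1] j = l.getD (l.length - 1) 0 := ht
      rw [pfun_iter_leaf S l h2 h3 h1 hj hjl] at ht'
      have := getD_inj l h2 (by omega : min u (l.length - 1) < l.length) (by omega) ht'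
      omega

lemma dp_le_len {x : ℕ} (hx : x ∈ S) :
    (treeOfAux S l h1 h2 h3).dp x ≤ l.length := by
  by_cases hxl : x ∈ l
  · have hidx : List.idxOf x l < l.length := List.idxOf_lt_length_iff.2 hxl
    have hg : l.getD (List.idxOf x l) 0 = x := by
      rw [List.getD_eq_getElem l 0 hidx]; exact List.idxOf_get hidx
    rw [← hg, dp_chain S l h1 h2 h3 hidx]; omega
  · rw [dp_leaf S l h1 h2 h3 hx hxl]

lemma depth_treeOfAux (hcard : l.length < S.card) :
    (treeOfAux S l h1 h2 h3).depth = l.length := by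
  apply le_antisymm
  · exact Finset.sup_le fun x hx => dp_le_len S l h1 h2 h3 hx
  · have hns : ¬ S ⊆ l.toFinset := by
      intro h
      have := Finset.card_le_card h
      rw [List.toFinset_card_of_nodup h2] at this
      omega
    obtain ⟨x, hxS, hxl⟩ := Finset.not_subset.1 hns
    rw [List.mem_toFinset] at hxl
    calc l.length = (treeOfAux S l h1 h2 h3).dp x := (dp_leaf S l h1 h2 h3 hxS hxl).symm
    _ ≤ _ := Finset.le_sup hxS

lemma desSet_treeOfAux :
    (treeOfAux S l h1 h2 h3).desSet =
      (wordDesSet l).image (fun t => l.getD t 0) ∪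
        (S \ l.toFinset).filter (fun j => l.headD 0 < j) := by
  have hl : 0 < l.length := List.length_pos_iff.2 h1
  ext x
  rw [RTree.desSet, Finset.mem_filter, Finset.mem_union, Finset.mem_image,
    Finset.mem_filter, Finset.mem_sdiff, List.mem_toFinset,
    root_treeOfAux S l h1 h2 h3, parent_treeOfAux S l h1 h2 h3]
  constructor
  · rintro ⟨hxS, hxr, hdes⟩
    by_cases hxl : x ∈ l
    · left
      have hidx : List.idxOf x l < l.length := List.idxOf_lt_length_iff.2 hxl
      have hg : l.getD (List.idxOf x l) 0 = x := by
        rw [List.getD_eq_getElem l 0 hidx]; exact List.idxOf_get hidx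
      refine ⟨List.idxOf x l, ?_, hg⟩
      have hne : List.idxOf x l ≠ l.length - 1 := by
        intro he
        exact hxr (by rw [← hg, he])
      rw [wordDesSet, Finset.mem_filter, Finset.mem_range]
      refine ⟨by omega, ?_⟩
      have hp : pfun S l x = l.getD (List.idxOf x l + 1) 0 := by
        conv_lhs => rw [← hg]
        exact pfun_getD' S l h2 h3 (by omega)
      rw [hp] at hdes
      conv_rhs => rw [hg]
      exact hdes
    · right
      rw [pfun_leaf S l hxS hxl] at hdes
      exact ⟨⟨hxS, hxl⟩, hdes⟩
  · rintro (⟨t, ht, rfl⟩ | ⟨⟨hxS, hxl⟩, hlt⟩)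
    · rw [wordDesSet, Finset.mem_filter, Finset.mem_range] at ht
      obtain ⟨htl, hdes⟩ := ht
      have ht1 : t + 1 < l.length := by omega
      refine ⟨h3 _ (getD_mem l (by omega)), ?_, ?_⟩
      · intro he
        have := getD_inj l h2 (by omega) (by omega) he
        omega
      · rw [pfun_getD' S l h2 h3 ht1]
        exact hdes
    · refine ⟨hxS, ?_, ?_⟩
      · intro he
        exact hxl (he ▸ getD_mem l (by omega))
      · rwa [pfun_leaf S l hxS hxl]

omit h1 h2 h3 in
lemma chain_leaf_disjoint :
    Disjoint ((wordDesSet l).image (fun t => l.getD t 0))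
      ((S \ l.toFinset).filter (fun j => l.headD 0 < j)) := by
  rw [Finset.disjoint_left]
  rintro x hx hx'
  rw [Finset.mem_image] at hx
  obtain ⟨t, ht, rfl⟩ := hx
  rw [wordDesSet, Finset.mem_filter, Finset.mem_range] at ht
  rw [Finset.mem_filter, Finset.mem_sdiff, List.mem_toFinset] at hx'
  exact hx'.1.2 (getD_mem l (by omega))

lemma des_treeOfAux :
    (treeOfAux S l h1 h2 h3).des =
      wordDes l + ((S \ l.toFinset).filter (fun j => l.headD 0 < j)).card := by
  rw [RTree.des, desSet_treeOfAux S l h1 h2 h3,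
    Finset.card_union_of_disjoint (chain_leaf_disjoint S l),
    Finset.card_image_of_injOn, wordDes]
  intro a ha b hb hab
  simp only [Finset.mem_coe, wordDesSet, Finset.mem_filter, Finset.mem_range] at ha hb
  exact getD_inj l h2 (by omega) (by omega) hab

lemma maj_treeOfAux (hcard : l.length < S.card) :
    (treeOfAux S l h1 h2 h3).maj =
      wordMaj l + wordDes l +
        ((S \ l.toFinset).filter (fun j => l.headD 0 < j)).card := by
  have hl : 0 < l.length := List.length_pos_iff.2 h1
  rw [RTree.maj, desSet_treeOfAux S l h1 h2 h3,
    Finset.sum_union (chain_leaf_disjoint S l)]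
  have h1' : ∑ x ∈ (wordDesSet l).image (fun t => l.getD t 0),
      ((treeOfAux S l h1 h2 h3).depth -
        (treeOfAux S l h1 h2 h3).dp ((treeOfAux S l h1 h2 h3).parent x)) =
      ∑ t ∈ wordDesSet l, (t + 2) := by
    rw [Finset.sum_image (by
      intro a ha b hb hab
      simp only [Finset.mem_coe, wordDesSet, Finset.mem_filter, Finset.mem_range] at ha hb
      exact getD_inj l h2 (by omega) (by omega) hab)]
    apply Finset.sum_congr rfl
    intro t ht
    rw [wordDesSet, Finset.mem_filter, Finset.mem_range] at ht
    rw [parent_treeOfAux S l h1 h2 h3, pfun_getD' S l h2 h3 (by omega),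
      dp_chain S l h1 h2 h3 (by omega), depth_treeOfAux S l h1 h2 h3 hcard]
    omega
  have h2' : ∑ x ∈ (S \ l.toFinset).filter (fun j => l.headD 0 < j),
      ((treeOfAux S l h1 h2 h3).depth -
        (treeOfAux S l h1 h2 h3).dp ((treeOfAux S l h1 h2 h3).parent x)) =
      ((S \ l.toFinset).filter (fun j => l.headD 0 < j)).card := by
    rw [Finset.card_eq_sum_ones]
    apply Finset.sum_congr rfl
    intro x hx
    rw [Finset.mem_filter, Finset.mem_sdiff, List.mem_toFinset] at hx
    rw [parent_treeOfAux S l h1 h2 h3, pfun_leaf S l hx.1.1 hx.1.2,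
      headD_eq_getD l h1, dp_chain S l h1 h2 h3 (by omega),
      depth_treeOfAux S l h1 h2 h3 hcard]
    omega
  rw [h1', h2']
  have h3' : ∑ t ∈ wordDesSet l, (t + 2) = wordMaj l + wordDes l := by
    rw [wordMaj, wordDes, Finset.card_eq_sum_ones, ← Finset.sum_add_distrib]
  rw [h3']

end Stats
end Aux

namespace Aux
open Finset

section Desc

variable (S : Finset ℕ) (l : List ℕ)
  (h1 : l ≠ []) (h2 : l.Nodup) (h3 : ∀ x ∈ l, x ∈ S)

include h2 in
lemma mem_take_iff {x : ℕ} {i : ℕ} (hx : x ∈ l) :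
    x ∈ l.take (i+1) ↔ List.idxOf x l ≤ i := by
  have hidx : List.idxOf x l < l.length := List.idxOf_lt_length_iff.2 hx
  rw [List.mem_take_iff_getElem]
  constructor
  · rintro ⟨j, hj, rfl⟩
    have : List.idxOf l[j] l = j := List.get_idxOf h2 ⟨j, by omega⟩
    omega
  · intro h
    refine ⟨List.idxOf x l, by omega, List.idxOf_get hidx⟩

include h1 h2 h3

lemma desc_chain {i : ℕ} (hi : i < l.length) :
    (treeOfAux S l h1 h2 h3).desc (l.getD i 0) =
      (l.take (i+1)).toFinset ∪ (S \ l.toFinset) := by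
  have hl : 0 < l.length := List.length_pos_iff.2 h1
  ext x
  rw [mem_desc, Finset.mem_union, List.mem_toFinset, Finset.mem_sdiff, List.mem_toFinset]
  show (x ∈ S ∧ ∃ t, (pfun S l)^[t] x = l.getD i 0) ↔ _
  constructor
  · rintro ⟨hxS, t, ht⟩
    by_cases hxl : x ∈ l
    · left
      have hidx : List.idxOf x l < l.length := List.idxOf_lt_length_iff.2 hxl
      have hg : l.getD (List.idxOf x l) 0 = x := by
        rw [List.getD_eq_getElem l 0 hidx]; exact List.idxOf_get hidx
      rw [← hg, pfun_iter S l h2 h3 h1 hidx] at ht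
      have := getD_inj l h2 (by omega) hi ht
      rw [mem_take_iff l h2 hxl]
      omega
    · right; exact ⟨hxS, hxl⟩
  · rintro (hx | ⟨hxS, hxl⟩)
    · have hxl : x ∈ l := List.mem_of_mem_take hx
      have hidx : List.idxOf x l < l.length := List.idxOf_lt_length_iff.2 hxl
      have hg : l.getD (List.idxOf x l) 0 = x := by
        rw [List.getD_eq_getElem l 0 hidx]; exact List.idxOf_get hidx
      rw [mem_take_iff l h2 hxl] at hx
      have key := pfun_iter S l h2 h3 h1 hidx (i - List.idxOf x l)
      rw [hg] at key
      refine ⟨h3 _ hxl, i - List.idxOf x l, key.trans ?_⟩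
      congr 1; omega
    · refine ⟨hxS, i + 1, ?_⟩
      rw [pfun_iter_leaf S l h2 h3 h1 hxS hxl]
      congr 1; omega

lemma desc_leaf {j : ℕ} (hj : j ∈ S) (hjl : j ∉ l) :
    (treeOfAux S l h1 h2 h3).desc j = {j} := by
  have hl : 0 < l.length := List.length_pos_iff.2 h1
  ext x
  rw [mem_desc, Finset.mem_singleton]
  show (x ∈ S ∧ ∃ t, (pfun S l)^[t] x = j) ↔ _
  constructor
  · rintro ⟨hxS, t, ht⟩
    by_contra hne
    by_cases hxl : x ∈ l
    · have hidx : List.idxOf x l < l.length := List.idxOf_lt_length_iff.2 hxl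
      have hg : l.getD (List.idxOf x l) 0 = x := by
        rw [List.getD_eq_getElem l 0 hidx]; exact List.idxOf_get hidx
      rw [← hg, pfun_iter S l h2 h3 h1 hidx] at ht
      exact hjl (ht ▸ getD_mem l (by omega))
    · match t with
      | 0 => exact hne ht
      | (u+1) =>
        rw [pfun_iter_leaf S l h2 h3 h1 hxS hxl] at ht
        exact hjl (ht ▸ getD_mem l (by omega))
  · rintro rfl
    exact ⟨hj, 0, rfl⟩

lemma card_desc_chain {i : ℕ} (hi : i < l.length) (hsub : l.toFinset ⊆ S) :
    ((treeOfAux S l h1 h2 h3).desc (l.getD i 0)).card = (i + 1) + (S.card - l.length) := by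
  rw [desc_chain S l h1 h2 h3 hi]
  rw [Finset.card_union_of_disjoint (by
    rw [Finset.disjoint_left]
    intro x hx hx'
    rw [List.mem_toFinset] at hx
    rw [Finset.mem_sdiff, List.mem_toFinset] at hx'
    exact hx'.2 (List.mem_of_mem_take hx))]
  have htake : (l.take (i+1)).toFinset.card = i + 1 := by
    rw [List.toFinset_card_of_nodup ((List.take_sublist _ _).nodup h2),
      List.length_take]
    omega
  rw [htake, Finset.card_sdiff_of_subset hsub, List.toFinset_card_of_nodup h2]

lemma isBTree_treeOfAux
    (n kk : ℕ) (B : Finset (Finset ℕ))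
    (hBc : ∀ I : Finset ℕ, I ∈ B ↔ (∃ i ∈ S, I = {i}) ∨ (I ⊆ S ∧ kk ≤ I.card))
    (hk2 : 2 ≤ kk)
    (hlen : l.length + (kk - 1) = S.card) :
    IsBTree S B (treeOfAux S l h1 h2 h3) := by
  have hl : 0 < l.length := List.length_pos_iff.2 h1
  have hsub : l.toFinset ⊆ S := by
    intro x hx; rw [List.mem_toFinset] at hx; exact h3 _ hx
  constructor
  · intro i hi
    by_cases hil : i ∈ l
    · have hidx : List.idxOf i l < l.length := List.idxOf_lt_length_iff.2 hil
      have hg : l.getD (List.idxOf i l) 0 = i := by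
        rw [List.getD_eq_getElem l 0 hidx]; exact List.idxOf_get hidx
      rw [hBc]; right
      have hd := desc_chain S l h1 h2 h3 hidx
      have hc := card_desc_chain S l h1 h2 h3 hidx hsub
      rw [hg] at hd hc
      constructor
      · rw [hd]
        apply Finset.union_subset _ (Finset.sdiff_subset)
        intro x hx
        rw [List.mem_toFinset] at hx
        exact h3 _ (List.mem_of_mem_take hx)
      · rw [hc]
        omega
    · rw [desc_leaf S l h1 h2 h3 hi hil, hBc]
      left; exact ⟨i, hi, rfl⟩
  · intro I hIS hI2 hinc
    -- every element of I is a leaf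
    have hleaf : ∀ x ∈ I, x ∉ l := by
      intro x hxI hxl
      have hidx : List.idxOf x l < l.length := List.idxOf_lt_length_iff.2 hxl
      have hg : l.getD (List.idxOf x l) 0 = x := by
        rw [List.getD_eq_getElem l 0 hidx]; exact List.idxOf_get hidx
      obtain ⟨a, ha, b, hb, hab⟩ := (Finset.one_lt_card (s := I)).1 (by omega)
      have hy : ∃ y ∈ I, y ≠ x := by
        by_cases hax : a = x
        · exact ⟨b, hb, by rw [← hax]; exact fun h => hab h.symm⟩
        · exact ⟨a, ha, hax⟩
      obtain ⟨y, hyI, hyx⟩ := hy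
      have hyS : y ∈ S := hIS hyI
      by_cases hyl : y ∈ l
      · -- both on chain: comparable
        have hidy : List.idxOf y l < l.length := List.idxOf_lt_length_iff.2 hyl
        have hgy : l.getD (List.idxOf y l) 0 = y := by
          rw [List.getD_eq_getElem l 0 hidy]; exact List.idxOf_get hidy
        rcases le_or_gt (List.idxOf y l) (List.idxOf x l) with hle | hlt
        · have hd := desc_chain S l h1 h2 h3 hidx
          rw [hg] at hd
          have : y ∈ (treeOfAux S l h1 h2 h3).desc x := by
            rw [hd, Finset.mem_union, List.mem_toFinset]
            left; rw [mem_take_iff l h2 hyl]; omega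
          exact ((hinc y hyI x hxI hyx).1) this
        · have hd := desc_chain S l h1 h2 h3 hidy
          rw [hgy] at hd
          have : x ∈ (treeOfAux S l h1 h2 h3).desc y := by
            rw [hd, Finset.mem_union, List.mem_toFinset]
            left; rw [mem_take_iff l h2 hxl]; omega
          exact ((hinc y hyI x hxI hyx).2) this
      · -- y is a leaf: y ∈ desc x
        have hd := desc_chain S l h1 h2 h3 hidx
        rw [hg] at hd
        have : y ∈ (treeOfAux S l h1 h2 h3).desc x := by
          simp only [hd, Finset.mem_union, Finset.mem_sdiff, List.mem_toFinset]
          right; exact ⟨hyS, hyl⟩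
        exact ((hinc y hyI x hxI hyx).1) this
    have hbi : I.biUnion (treeOfAux S l h1 h2 h3).desc = I := by
      apply Finset.Subset.antisymm
      · intro x hx
        rw [Finset.mem_biUnion] at hx
        obtain ⟨j, hjI, hxj⟩ := hx
        rw [desc_leaf S l h1 h2 h3 (hIS hjI) (hleaf j hjI), Finset.mem_singleton] at hxj
        rwa [hxj]
      · intro x hx
        rw [Finset.mem_biUnion]
        exact ⟨x, hx, self_mem_desc _ (hIS hx)⟩
    rw [hbi, hBc]
    rintro (⟨i, _, rfl⟩ | ⟨_, hcard⟩)
    · simp at hI2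
    · have hIsub : I ⊆ S \ l.toFinset := by
        intro x hx
        rw [Finset.mem_sdiff, List.mem_toFinset]
        exact ⟨hIS hx, hleaf x hx⟩
      have := Finset.card_le_card hIsub
      rw [Finset.card_sdiff_of_subset hsub, List.toFinset_card_of_nodup h2] at this
      omega

end Desc
end Aux

namespace Aux
open Finset

def treeOf (S : Finset ℕ) (hS : S.Nonempty) (l : List ℕ) : RTree S :=
  if h : l ≠ [] ∧ l.Nodup ∧ ∀ x ∈ l, x ∈ S then treeOfAux S l h.1 h.2.1 h.2.2
  else treeOfAux S (S.sort (· ≤ ·))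
    (by
      intro h
      have hc := Finset.card_pos.2 hS
      rw [← Finset.length_sort (α := ℕ) (· ≤ ·) (s := S), h] at hc
      simp at hc)
    (Finset.sort_nodup _ _)
    (fun x hx => (Finset.mem_sort _).1 hx)

lemma treeOf_eq (S : Finset ℕ) (hS : S.Nonempty) (l : List ℕ)
    (h : l ≠ [] ∧ l.Nodup ∧ ∀ x ∈ l, x ∈ S) :
    treeOf S hS l = treeOfAux S l h.1 h.2.1 h.2.2 := dif_pos h

lemma treeOfAux_inj (S : Finset ℕ) (l l' : List ℕ)
    (h1 : l ≠ []) (h2 : l.Nodup) (h3 : ∀ x ∈ l, x ∈ S)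
    (h1' : l' ≠ []) (h2' : l'.Nodup) (h3' : ∀ x ∈ l', x ∈ S)
    (hlen : l.length = l'.length)
    (heq : treeOfAux S l h1 h2 h3 = treeOfAux S l' h1' h2' h3') : l = l' := by
  have hL : 0 < l.length := List.length_pos_iff.2 h1
  apply List.ext_getElem hlen.symm ?_ |>.symm
  intro t ht ht'
  -- show l'[t] = l[t]
  have ha'S : l'[t] ∈ S := h3' _ (List.getElem_mem _)
  have hdp' : (treeOfAux S l' h1' h2' h3').dp (l'.getD t 0) = l'.length - 1 - t :=
    dp_chain S l' h1' h2' h3' ht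
  rw [← heq] at hdp'
  rw [List.getD_eq_getElem l' 0 ht] at hdp'
  by_cases hml : l'[t] ∈ l
  · have hidx : List.idxOf l'[t] l < l.length := List.idxOf_lt_length_iff.2 hml
    have hg : l.getD (List.idxOf l'[t] l) 0 = l'[t] := by
      rw [List.getD_eq_getElem l 0 hidx]; exact List.idxOf_get hidx
    have hdp : (treeOfAux S l h1 h2 h3).dp (l.getD (List.idxOf l'[t] l) 0) =
        l.length - 1 - List.idxOf l'[t] l := dp_chain S l h1 h2 h3 hidx
    rw [hg] at hdp
    have hidxt : List.idxOf l'[t] l = t := by omega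
    rw [← hg, hidxt, List.getD_eq_getElem l 0 ht']
  · have hdp : (treeOfAux S l h1 h2 h3).dp l'[t] = l.length :=
      dp_leaf S l h1 h2 h3 ha'S hml
    omega

lemma exists_word (S : Finset ℕ) (kk : ℕ) (B : Finset (Finset ℕ))
    (hS2 : 2 ≤ S.card)
    (hBc : ∀ I : Finset ℕ, I ∈ B ↔ (∃ i ∈ S, I = {i}) ∨ (I ⊆ S ∧ kk ≤ I.card))
    (hk2 : 2 ≤ kk) (hkS : kk ≤ S.card)
    (T : RTree S) (hT : IsBTree S B T) :
    ∃ l : List ℕ, l ≠ [] ∧ l.Nodup ∧ (∀ x ∈ l, x ∈ S) ∧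
      l.length + (kk - 1) = S.card ∧ pfun S l = T.parent := by
  classical
  have hdesc_sub : ∀ i, T.desc i ⊆ S := fun i => Finset.filter_subset _ _
  have hdesc_cases : ∀ i ∈ S, T.desc i = {i} ∨ kk ≤ (T.desc i).card := by
    intro i hi
    rcases (hBc _).1 (hT.1 i hi) with ⟨j, hj, hdj⟩ | ⟨_, hcard⟩
    · left
      have : i ∈ T.desc i := self_mem_desc T hi
      rw [hdj, Finset.mem_singleton] at this
      rw [hdj, this]
    · right; exact hcard
  have hcomp : ∀ i ∈ S, ∀ j ∈ S, kk ≤ (T.desc i).card → kk ≤ (T.desc j).card →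
      i ≠ j → i ∈ T.desc j ∨ j ∈ T.desc i := by
    intro i hi j hj hbi hbj hij
    by_contra hcon
    push_neg at hcon
    obtain ⟨hc1, hc2⟩ := hcon
    have hpair : ({i, j} : Finset ℕ).biUnion T.desc ∉ B := by
      apply hT.2
      · intro x hx
        rw [Finset.mem_insert, Finset.mem_singleton] at hx
        rcases hx with rfl | rfl <;> assumption
      · rw [Finset.card_insert_of_notMem (by simpa using hij), Finset.card_singleton]
      · intro a ha b hb hab
        rw [Finset.mem_insert, Finset.mem_singleton] at ha hb
        rcases ha with rfl | rfl <;> rcases hb with rfl | rfl <;>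
          first
          | exact absurd rfl hab
          | exact ⟨hc1, hc2⟩
          | exact ⟨hc2, hc1⟩
    apply hpair
    rw [hBc]
    right
    constructor
    · intro x hx
      rw [Finset.mem_biUnion] at hx
      obtain ⟨a, _, hxa⟩ := hx
      exact hdesc_sub a hxa
    · calc kk ≤ (T.desc i).card := hbi
        _ ≤ _ := Finset.card_le_card (by
          intro x hx
          rw [Finset.mem_biUnion]
          exact ⟨i, by simp, hx⟩)
  have hrootbig : kk ≤ (T.desc T.root).card := by
    rw [desc_root]; exact hkS
  -- b : the big vertex of maximal depth
  obtain ⟨b, hbF, hbmax⟩ := Finset.exists_max_image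
    (S.filter fun i => kk ≤ (T.desc i).card) T.dp ⟨T.root, by
      rw [Finset.mem_filter]; exact ⟨T.root_mem, hrootbig⟩⟩
  rw [Finset.mem_filter] at hbF
  obtain ⟨hbS, hbBig⟩ := hbF
  have hbmax' : ∀ i ∈ S, kk ≤ (T.desc i).card → T.dp i ≤ T.dp b := by
    intro i hi hbig
    exact hbmax i (Finset.mem_filter.2 ⟨hi, hbig⟩)
  have hchain : ∀ i ∈ S, kk ≤ (T.desc i).card →
      T.dp i ≤ T.dp b ∧ T.parent^[T.dp b - T.dp i] b = i := by
    intro i hi hbig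
    by_cases hib : i = b
    · subst hib; simp
    rcases hcomp i hi b hbS hbig hbBig hib with hmem | hmem
    · -- i ∈ desc b: impossible unless i = b
      obtain ⟨hle, hit⟩ := desc_key T hbS hmem
      have := hbmax' i hi hbig
      have h0 : T.dp i - T.dp b = 0 := by omega
      rw [h0] at hit
      exact absurd hit hib
    · exact desc_key T hi hmem
  have hbig_card2 : (2:ℕ) ≤ (T.desc b).card := le_trans hk2 hbBig
  have hfix_root : ∀ j ∈ S, T.parent j = j → j = T.root := by
    intro j hj hfix
    obtain ⟨u, hu⟩ := T.reach j hj
    have hfi : ∀ v, T.parent^[v] j = j := by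
      intro v
      induction v with
      | zero => rfl
      | succ v ih => rw [Function.iterate_succ_apply', ih, hfix]
    rw [hfi u] at hu; exact hu
  have hleafparent : ∀ j ∈ S, T.desc j = {j} → T.parent j = b := by
    intro j hj hdj
    have hjroot : j ≠ T.root := by
      rintro rfl
      have := desc_root T
      rw [hdj] at this
      rw [← this] at hS2
      simp at hS2
    have hpjS : T.parent j ∈ S := T.parent_mem j hj
    have hjdpj : j ∈ T.desc (T.parent j) :=
      (mem_desc T).2 ⟨hj, 1, by simp⟩
    have hpjj : T.parent j ≠ j := by
      intro h
      exact hjroot (hfix_root j hj h)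
    have hpjbig : kk ≤ (T.desc (T.parent j)).card := by
      rcases hdesc_cases _ hpjS with h | h
      · exfalso
        rw [h, Finset.mem_singleton] at hjdpj
        exact hpjj hjdpj.symm
      · exact h
    by_contra hpjb
    -- T.parent j ≠ b
    obtain ⟨hdple, hit⟩ := hchain _ hpjS hpjbig
    have hdplt : T.dp (T.parent j) < T.dp b := by
      rcases eq_or_lt_of_le hdple with h | h
      · exfalso
        rw [h, Nat.sub_self] at hit
        rw [Function.iterate_zero_apply] at hit
        exact hpjb hit.symm
      · exact h
    have hdpj : T.dp j = T.dp (T.parent j) + 1 := (dp_parent T hj hjroot).symm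
    have hbnej : b ≠ j := by
      intro h
      rw [h] at hbBig
      rw [hdj] at hbBig
      simp at hbBig; omega
    have hjnd : j ∉ T.desc b := by
      intro hmem
      obtain ⟨hle, hit'⟩ := desc_key T hbS hmem
      have h0 : T.dp j - T.dp b = 0 := by omega
      rw [h0, Function.iterate_zero_apply] at hit'
      exact hbnej hit'.symm
    have hbnd : b ∉ T.desc j := by
      rw [hdj, Finset.mem_singleton]
      exact hbnej
    have hpair : ({j, b} : Finset ℕ).biUnion T.desc ∉ B := by
      apply hT.2
      · intro x hx
        rw [Finset.mem_insert, Finset.mem_singleton] at hx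
        rcases hx with rfl | rfl <;> assumption
      · rw [Finset.card_insert_of_notMem (by simpa using fun h => hbnej h.symm),
          Finset.card_singleton]
      · intro a ha b' hb' hab
        rw [Finset.mem_insert, Finset.mem_singleton] at ha hb'
        rcases ha with rfl | rfl <;> rcases hb' with rfl | rfl <;>
          first
          | exact absurd rfl hab
          | exact ⟨hjnd, hbnd⟩
          | exact ⟨hbnd, hjnd⟩
    apply hpair
    rw [hBc]
    right
    constructor
    · intro x hx
      rw [Finset.mem_biUnion] at hx
      obtain ⟨a, _, hxa⟩ := hx
      exact hdesc_sub a hxa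
    · calc kk ≤ (T.desc b).card := hbBig
        _ ≤ _ := Finset.card_le_card (by
          intro x hx
          rw [Finset.mem_biUnion]
          exact ⟨b, by simp, hx⟩)
  -- the word
  set m' := T.dp b + 1 with hm'
  set l : List ℕ := (List.range m').map (fun u => T.parent^[u] b) with hldef
  have hlen : l.length = m' := by rw [hldef]; simp
  have hgetD : ∀ u, u < m' → l.getD u 0 = T.parent^[u] b := by
    intro u hu
    rw [hldef, List.getD_eq_getElem _ 0
      (by rw [List.length_map, List.length_range]; exact hu)]
    rw [List.getElem_map, List.getElem_range]
  have hmeml : ∀ x, x ∈ l ↔ ∃ u < m', T.parent^[u] b = x := by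
    intro x
    rw [hldef, List.mem_map]
    constructor
    · rintro ⟨u, hu, hx⟩; exact ⟨u, List.mem_range.1 hu, hx⟩
    · rintro ⟨u, hu, hx⟩; exact ⟨u, List.mem_range.2 hu, hx⟩
  have h1 : l ≠ [] := by
    intro h
    rw [h] at hlen
    simp at hlen
  have h2 : l.Nodup := by
    rw [hldef]
    apply List.Nodup.map_on ?_ List.nodup_range
    intro u hu v hv huv
    rw [List.mem_range] at hu hv
    have h1' := dp_iter T hbS (show u ≤ T.dp b by omega)
    have h2' := dp_iter T hbS (show v ≤ T.dp b by omega)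
    rw [huv] at h1'
    omega
  have h3 : ∀ x ∈ l, x ∈ S := by
    intro x hx
    rw [hmeml] at hx
    obtain ⟨u, _, rfl⟩ := hx
    exact iter_mem T hbS u
  have hbig_in_l : ∀ i ∈ S, kk ≤ (T.desc i).card → i ∈ l := by
    intro i hi hbig
    obtain ⟨hle, hit⟩ := hchain i hi hbig
    rw [hmeml]
    exact ⟨T.dp b - T.dp i, by omega, hit⟩
  have hleaf_out : ∀ x ∈ S, x ∉ l → T.desc x = {x} := by
    intro x hx hxl
    rcases hdesc_cases x hx with h | h
    · exact h
    · exact absurd (hbig_in_l x hx h) hxl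
  have hCsub : l.toFinset ⊆ S := by
    intro x hx; rw [List.mem_toFinset] at hx; exact h3 x hx
  have hbl : b ∈ l := by rw [hmeml]; exact ⟨0, by omega, rfl⟩
  -- desc b = insert b (S \ l.toFinset)
  have hdescb : T.desc b = insert b (S \ l.toFinset) := by
    ext x
    rw [Finset.mem_insert, Finset.mem_sdiff, List.mem_toFinset]
    constructor
    · intro hmem
      have hxS : x ∈ S := hdesc_sub b hmem
      by_cases hxl : x ∈ l
      · left
        rw [hmeml] at hxl
        obtain ⟨u, hu, rfl⟩ := hxl
        obtain ⟨hle, _⟩ := desc_key T hbS hmem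
        have := dp_iter T hbS (show u ≤ T.dp b by omega)
        have hu0 : u = 0 := by omega
        rw [hu0]; rfl
      · right; exact ⟨hxS, hxl⟩
    · rintro (rfl | ⟨hxS, hxl⟩)
      · exact self_mem_desc T hbS
      · have := hleafparent x hxS (hleaf_out x hxS hxl)
        exact (mem_desc T).2 ⟨hxS, 1, by simp [this]⟩
  have hbnotin : b ∉ S \ l.toFinset := by
    rw [Finset.mem_sdiff, List.mem_toFinset]
    exact fun h => h.2 hbl
  have hcardL : (S \ l.toFinset).card = kk - 1 := by
    have hge : kk - 1 ≤ (S \ l.toFinset).card := by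
      have := hbBig
      rw [hdescb, Finset.card_insert_of_notMem hbnotin] at this
      omega
    have hle : (S \ l.toFinset).card ≤ kk - 1 := by
      by_cases hc2 : 2 ≤ (S \ l.toFinset).card
      · have hnB : (S \ l.toFinset).biUnion T.desc ∉ B := by
          apply hT.2
          · exact Finset.sdiff_subset
          · exact hc2
          · intro a ha b' hb' hab
            rw [Finset.mem_sdiff, List.mem_toFinset] at ha hb'
            constructor
            · rw [hleaf_out b' hb'.1 hb'.2, Finset.mem_singleton]; exact hab
            · rw [hleaf_out a ha.1 ha.2, Finset.mem_singleton]
              exact fun h => hab h.symm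
        have hbiU : (S \ l.toFinset).biUnion T.desc = S \ l.toFinset := by
          apply Finset.Subset.antisymm
          · intro x hx
            rw [Finset.mem_biUnion] at hx
            obtain ⟨a, haL, hxa⟩ := hx
            rw [Finset.mem_sdiff, List.mem_toFinset] at haL
            rw [hleaf_out a haL.1 haL.2, Finset.mem_singleton] at hxa
            rw [hxa]
            rw [Finset.mem_sdiff, List.mem_toFinset]
            exact haL
          · intro x hx
            rw [Finset.mem_biUnion]
            refine ⟨x, hx, self_mem_desc T ?_⟩
            rw [Finset.mem_sdiff] at hx
            exact hx.1
        rw [hbiU] at hnB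
        by_contra hgt
        apply hnB
        rw [hBc]
        right
        exact ⟨Finset.sdiff_subset, by omega⟩
      · omega
    omega
  have hcardC : l.toFinset.card = m' := by
    rw [List.toFinset_card_of_nodup h2, hlen]
  have hlencard : l.length + (kk - 1) = S.card := by
    have := Finset.card_sdiff_of_subset hCsub
    have hCle := Finset.card_le_card hCsub
    rw [hcardL] at this
    rw [hlen]
    omega
  refine ⟨l, h1, h2, h3, hlencard, ?_⟩
  -- pfun S l = T.parent
  funext j
  by_cases hjS : j ∈ S
  · by_cases hjl : j ∈ l
    · have hidx : List.idxOf j l < l.length := List.idxOf_lt_length_iff.2 hjl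
      have hg : l.getD (List.idxOf j l) 0 = j := by
        rw [List.getD_eq_getElem l 0 hidx]; exact List.idxOf_get hidx
      have hjit : T.parent^[List.idxOf j l] b = j := by
        have := hgetD (List.idxOf j l) (by omega)
        rw [hg] at this; exact this.symm
      have key := pfun_getD S l h2 h3 hidx
      rw [hg] at key
      by_cases hc : List.idxOf j l + 1 < l.length
      · rw [key, List.getD_eq_getElem l j hc]
        have : l[List.idxOf j l + 1] = T.parent^[List.idxOf j l + 1] b := by
          have := hgetD (List.idxOf j l + 1) (by omega)
          rw [List.getD_eq_getElem l 0 hc] at this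
          exact this
        rw [this, Function.iterate_succ_apply', hjit]
      · -- j is the root
        have hidxe : List.idxOf j l = m' - 1 := by omega
        have hjroot : j = T.root := by
          rw [← hjit, hidxe]
          have : m' - 1 = T.dp b := by omega
          rw [this]
          exact iter_dp T hbS
        rw [key, List.getD_eq_default l j (by omega), hjroot, T.parent_root]
    · rw [pfun_leaf S l hjS hjl, headD_eq_getD l h1, hgetD 0 (by omega)]
      exact (hleafparent j hjS (hleaf_out j hjS hjl)).symm
  · rw [pfun_out S l hjS, T.parent_out j hjS]

end Aux

/-- For `2 ≤ k ≤ n`, the `q`-`h`-polynomial of the nestohedron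
of `B_n^k` is `∑_A ∑_{π ∈ S_A} t^{des π + c(A,π)} q^{maj π + des π + c(A,π)}`,
where `A` ranges over `(n−k+1)`-subsets of `[n]`, `π` over orderings of `A`,
and `c(A,π) = #{j ∈ [n] \ A : j > π₁}`.  (Stated for all commutative rings,
equivalently as an identity in `ℤ[t,q]`.) -/
theorem Bnk_qh_polynomial
    (n k : ℕ) (hn : 2 ≤ n) (hk2 : 2 ≤ k) (hkn : k ≤ n)
    (B : Finset (Finset ℕ))
    (hB : B = (Finset.Icc 1 n).image (fun i => ({i} : Finset ℕ)) ∪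
        ((Finset.Icc 1 n).powerset.filter fun I => k ≤ I.card))
    (R : Type) [CommRing R] (t q : R) :
    (∑ᶠ T ∈ {T : RTree (Finset.Icc 1 n) | IsBTree (Finset.Icc 1 n) B T},
        t ^ T.des * q ^ T.maj)
      = ∑ A ∈ (Finset.Icc 1 n).powersetCard (n - k + 1),
          ∑ l ∈ (A.sort (· ≤ ·)).permutations.toFinset,
            t ^ (wordDes l +
                  (((Finset.Icc 1 n) \ A).filter fun j => l.headD 0 < j).card) *
            q ^ (wordMaj l + wordDes l +
                  (((Finset.Icc 1 n) \ A).filter fun j => l.headD 0 < j).card) := by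
  classical
  set S : Finset ℕ := Finset.Icc 1 n with hSdef
  have hScard : S.card = n := by rw [hSdef, Nat.card_Icc]; omega
  have hS : S.Nonempty := ⟨1, by rw [hSdef, Finset.mem_Icc]; omega⟩
  set m : ℕ := n - k + 1 with hmdef
  have hm1 : 1 ≤ m := by omega
  have hmlt : m < n := by omega
  have hBc : ∀ I : Finset ℕ, I ∈ B ↔ (∃ i ∈ S, I = {i}) ∨ (I ⊆ S ∧ k ≤ I.card) := by
    intro I
    rw [hB, Finset.mem_union, Finset.mem_image, Finset.mem_filter, Finset.mem_powerset]
    constructor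
    · rintro (⟨i, hi, rfl⟩ | ⟨hsub, hcard⟩)
      · exact Or.inl ⟨i, hi, rfl⟩
      · exact Or.inr ⟨hsub, hcard⟩
    · rintro (⟨i, hi, rfl⟩ | ⟨hsub, hcard⟩)
      · exact Or.inl ⟨i, hi, rfl⟩
      · exact Or.inr ⟨hsub, hcard⟩
  set 𝕀 : Finset (Σ _ : Finset ℕ, List ℕ) :=
    (S.powersetCard m).sigma (fun A => (A.sort (· ≤ ·)).permutations.toFinset)
    with h𝕀def
  have hmem𝕀 : ∀ x : (Σ _ : Finset ℕ, List ℕ),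
      x ∈ 𝕀 ↔ x.1 ⊆ S ∧ x.1.card = m ∧ x.2.Perm (x.1.sort (· ≤ ·)) := by
    intro x
    rw [h𝕀def, Finset.mem_sigma, Finset.mem_powersetCard, List.mem_toFinset,
      List.mem_permutations]
    tauto
  have hvalid : ∀ x ∈ 𝕀,
      (x.2 ≠ [] ∧ x.2.Nodup ∧ ∀ y ∈ x.2, y ∈ S) ∧ x.2.length = m ∧ x.2.toFinset = x.1 := by
    intro x hx
    obtain ⟨hsub, hcard, hperm⟩ := (hmem𝕀 x).1 hx
    have hnd : x.2.Nodup := hperm.nodup_iff.2 (Finset.sort_nodup _ _)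
    have hlenx : x.2.length = m := by
      rw [hperm.length_eq, Finset.length_sort, hcard]
    have hne : x.2 ≠ [] := by
      intro h; rw [h] at hlenx; simp at hlenx
    have hmemS : ∀ y ∈ x.2, y ∈ S := by
      intro y hy
      exact hsub ((Finset.mem_sort _).1 (hperm.mem_iff.1 hy))
    have htf : x.2.toFinset = x.1 := by
      ext y; rw [List.mem_toFinset, hperm.mem_iff, Finset.mem_sort]
    exact ⟨⟨hne, hnd, hmemS⟩, hlenx, htf⟩
  set Φ : (Σ _ : Finset ℕ, List ℕ) → RTree S := fun x => Aux.treeOf S hS x.2 with hΦdef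
  have hset : {T : RTree S | IsBTree S B T} = ↑(𝕀.image Φ) := by
    ext T
    rw [Set.mem_setOf_eq, Finset.mem_coe, Finset.mem_image]
    constructor
    · intro hT
      obtain ⟨l, h1, h2, h3, hlc, hpf⟩ :=
        Aux.exists_word S k B (by omega) hBc hk2 (by omega) T hT
      have hlenl : l.length = m := by omega
      have hnd : l.Nodup := h2
      refine ⟨⟨l.toFinset, l⟩, ?_, ?_⟩
      · rw [hmem𝕀]
        refine ⟨?_, ?_, ?_⟩
        · intro y hy; rw [List.mem_toFinset] at hy; exact h3 y hy
        · rw [List.toFinset_card_of_nodup h2, hlenl]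
        · exact List.perm_of_nodup_nodup_toFinset_eq h2 (Finset.sort_nodup _ _)
            (by rw [Finset.sort_toFinset])
      · show Aux.treeOf S hS l = T
        rw [Aux.treeOf_eq S hS l ⟨h1, h2, h3⟩]
        apply Aux.eq_of_parent_eq
        rw [Aux.parent_treeOfAux]
        exact hpf
    · rintro ⟨x, hx, rfl⟩
      obtain ⟨⟨h1, h2, h3⟩, hlen, htf⟩ := hvalid x hx
      show IsBTree S B (Aux.treeOf S hS x.2)
      rw [Aux.treeOf_eq S hS x.2 ⟨h1, h2, h3⟩]
      exact Aux.isBTree_treeOfAux S x.2 h1 h2 h3 n k B hBc hk2 (by omega)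
  have hinj : ∀ x ∈ 𝕀, ∀ y ∈ 𝕀, Φ x = Φ y → x = y := by
    intro x hx y hy hxy
    obtain ⟨⟨h1, h2, h3⟩, hlen, htf⟩ := hvalid x hx
    obtain ⟨⟨h1', h2', h3'⟩, hlen', htf'⟩ := hvalid y hy
    rw [hΦdef] at hxy
    simp only at hxy
    rw [Aux.treeOf_eq S hS x.2 ⟨h1, h2, h3⟩, Aux.treeOf_eq S hS y.2 ⟨h1', h2', h3'⟩] at hxy
    have hll : x.2 = y.2 :=
      Aux.treeOfAux_inj S x.2 y.2 h1 h2 h3 h1' h2' h3' (by omega) hxy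
    have hAA : x.1 = y.1 := by rw [← htf, ← htf', hll]
    rcases x with ⟨A, l⟩
    rcases y with ⟨A', l'⟩
    simp only at hll hAA
    subst hll; subst hAA
    rfl
  calc (∑ᶠ T ∈ {T : RTree S | IsBTree S B T}, t ^ T.des * q ^ T.maj)
      = ∑ T ∈ 𝕀.image Φ, t ^ T.des * q ^ T.maj := by
        rw [hset, finsum_mem_coe_finset]
    _ = ∑ x ∈ 𝕀, t ^ (Φ x).des * q ^ (Φ x).maj := Finset.sum_image hinj
    _ = ∑ x ∈ 𝕀, t ^ (wordDes x.2 + ((S \ x.1).filter fun j => x.2.headD 0 < j).card) *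
          q ^ (wordMaj x.2 + wordDes x.2 +
            ((S \ x.1).filter fun j => x.2.headD 0 < j).card) := by
        apply Finset.sum_congr rfl
        intro x hx
        obtain ⟨⟨h1, h2, h3⟩, hlen, htf⟩ := hvalid x hx
        have hΦx : Φ x = Aux.treeOfAux S x.2 h1 h2 h3 :=
          Aux.treeOf_eq S hS x.2 ⟨h1, h2, h3⟩
        rw [hΦx, Aux.des_treeOfAux S x.2 h1 h2 h3,
          Aux.maj_treeOfAux S x.2 h1 h2 h3 (by omega), htf]
    _ = _ := by
        rw [h𝕀def, Finset.sum_sigma]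
end
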